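/- Let X be a finite partially ordered set whose comparability graph G is connected, let R be a ring, and let φ be a multiplicative automorphism of I(X,R) associated with a coherent system c. Then φ is inner if and only if for all x, y ∈ X, any two walks in G from x to y have equal weight. -/

import Mathlib

/-- A ring automorphism of the incidence algebra is *multiplicative* if it fixes every
function supported on the diagonal and maps functions vanishing on the diagonal to
functions vanishing on the diagonal. -/
def IsMultAut {X R : Type*} [Preorder X] [LocallyFiniteOrder X] [DecidableEq X] [Ring R]
    (φ : RingAut (IncidenceAlgebra R X)) : Prop :=
  (∀ f : IncidenceAlgebra R X, (∀ x y : X, x ≠ y → f x y = 0) → φ f = f) ∧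
  (∀ f : IncidenceAlgebra R X, (∀ x : X, f x x = 0) → ∀ x : X, (φ f) x x = 0)

/-- The comparability graph of a partially ordered set: `x` and `y` are adjacent iff
they are distinct and comparable. -/
def compGraph (X : Type*) [PartialOrder X] : SimpleGraph X where
  Adj x y := x < y ∨ y < x
  symm := ⟨fun _ _ h => h.symm⟩
  loopless := ⟨fun x h => h.elim (lt_irrefl x) (lt_irrefl x)⟩

open scoped Classical in
/-- The weight of a walk with respect to a system `c`: the product over the darts
`(s, t)` of the walk, in order, of `c s t` if `s < t` and of `(c t s)⁻¹` if `t < s`. -/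
noncomputable def walkWeight {X R : Type*} [PartialOrder X] [Ring R]
    (c : X → X → R) {H : SimpleGraph X} {x y : X} (p : H.Walk x y) : R :=
  (p.darts.map fun d => if d.toProd.1 < d.toProd.2 then c d.toProd.1 d.toProd.2
    else Ring.inverse (c d.toProd.2 d.toProd.1)).prod

section AuxWW

open SimpleGraph

lemma walkWeight_nil {X R : Type*} [PartialOrder X] [Ring R]
    (c : X → X → R) {H : SimpleGraph X} {x : X} :
    walkWeight c (Walk.nil : H.Walk x x) = 1 := by simp [walkWeight]

open scoped Classical in
lemma walkWeight_cons {X R : Type*} [PartialOrder X] [Ring R]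
    (c : X → X → R) {H : SimpleGraph X} {x y z : X} (h : H.Adj x y) (p : H.Walk y z) :
    walkWeight c (Walk.cons h p) =
      (if x < y then c x y else Ring.inverse (c y x)) * walkWeight c p := by
  simp [walkWeight]

lemma walkWeight_append {X R : Type*} [PartialOrder X] [Ring R]
    (c : X → X → R) {H : SimpleGraph X} {x y z : X} (p : H.Walk x y) (q : H.Walk y z) :
    walkWeight c (p.append q) = walkWeight c p * walkWeight c q := by
  simp [walkWeight, Walk.darts_append]

lemma center_ring_inverse_mem {R : Type*} [Ring R] {a : R}
    (hcen : a ∈ Set.center R) (hu : IsUnit a) : Ring.inverse a ∈ Set.center R := by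
  rw [Semigroup.mem_center_iff] at hcen ⊢
  intro g
  have h1 : a * (g * Ring.inverse a) = g := by
    rw [← mul_assoc, ← hcen g, mul_assoc, Ring.mul_inverse_cancel _ hu, mul_one]
  calc g * Ring.inverse a
      = Ring.inverse a * (a * (g * Ring.inverse a)) := by
        rw [Ring.inverse_mul_cancel_left _ _ hu]
    _ = Ring.inverse a * g := by rw [h1]

open scoped Classical in
lemma walkWeight_telescope {X R : Type*} [PartialOrder X] [Ring R]
    (c : X → X → R) (a : X → R) (ha : ∀ x, IsUnit (a x))
    (hedge : ∀ s t : X, (compGraph X).Adj s t →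
      (if s < t then c s t else Ring.inverse (c t s)) = Ring.inverse (a s) * a t) :
    ∀ {x y : X} (p : (compGraph X).Walk x y),
      walkWeight c p = Ring.inverse (a x) * a y := by
  intro x y p
  induction p with
  | nil => rw [walkWeight_nil, Ring.inverse_mul_cancel _ (ha _)]
  | @cons x w y h p ih =>
    rw [walkWeight_cons, hedge _ _ h, ih, mul_assoc,
      Ring.mul_inverse_cancel_left _ _ (ha w)]

end AuxWW

/-- A multiplicative automorphism associated with a coherent system `c`
is inner iff any two walks of the comparability graph with the same endpoints have equal
weight (Corollary 3.9). -/
theorem inner_iff_walk_weights_equal {X R : Type*} [PartialOrder X] [Fintype X]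
    [LocallyFiniteOrder X] [DecidableEq X] [Ring R]
    (hG : (compGraph X).Connected)
    (φ : RingAut (IncidenceAlgebra R X)) (hφ : IsMultAut φ)
    (c : X → X → R)
    (hc : ∀ x y : X, x < y → c x y ∈ Set.center R ∧ IsUnit (c x y))
    (hcoh : ∀ x z y : X, x < z → z < y → c x y = c x z * c z y)
    (hassoc : ∀ f : IncidenceAlgebra R X,
      (∀ x y : X, x < y → (φ f) x y = c x y * f x y) ∧ (∀ x : X, (φ f) x x = f x x)) :
    (∃ u : (IncidenceAlgebra R X)ˣ, ∀ f : IncidenceAlgebra R X, φ f = ↑u⁻¹ * f * ↑u) ↔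
    (∀ (x y : X) (p q : (compGraph X).Walk x y), walkWeight c p = walkWeight c q) := by
  classical
  constructor
  · rintro ⟨u, hu⟩ x y p q
    set a : X → R := fun s => (↑u : IncidenceAlgebra R X) s s with ha_def
    set b : X → R := fun s => (↑u⁻¹ : IncidenceAlgebra R X) s s with hb_def
    have hab : ∀ s, a s * b s = 1 := by
      intro s
      have h := congrFun (DFunLike.congr_fun u.mul_inv s) s
      rwa [IncidenceAlgebra.mul_apply, Finset.Icc_self, Finset.sum_singleton,
        IncidenceAlgebra.one_apply, if_pos rfl] at h
    have hba : ∀ s, b s * a s = 1 := by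
      intro s
      have h := congrFun (DFunLike.congr_fun u.inv_mul s) s
      rwa [IncidenceAlgebra.mul_apply, Finset.Icc_self, Finset.sum_singleton,
        IncidenceAlgebra.one_apply, if_pos rfl] at h
    have haU : ∀ s, IsUnit (a s) := fun s => ⟨⟨a s, b s, hab s, hba s⟩, rfl⟩
    have key : ∀ x y : X, x < y → a x * c x y = a y := by
      intro x y hxy
      let f : IncidenceAlgebra R X :=
        ⟨fun s t => if s = x ∧ t = y then (1 : R) else 0, by
          intro s t hst
          rw [if_neg]
          rintro ⟨rfl, rfl⟩
          exact hst hxy.le⟩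
      have hval : ∀ s t : X, f s t = if s = x ∧ t = y then (1 : R) else 0 := fun _ _ => rfl
      have h1 : (↑u : IncidenceAlgebra R X) * φ f = f * ↑u := by
        rw [hu f, ← mul_assoc, ← mul_assoc, Units.mul_inv, one_mul]
      have h2 := congrFun (DFunLike.congr_fun h1 x) y
      rw [IncidenceAlgebra.mul_apply, IncidenceAlgebra.mul_apply] at h2
      have hL : ∑ z ∈ Finset.Icc x y, (↑u : IncidenceAlgebra R X) x z * (φ f) z y
          = a x * c x y := by
        rw [Finset.sum_eq_single_of_mem x (Finset.left_mem_Icc.2 hxy.le)]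
        · rw [(hassoc f).1 x y hxy, hval, if_pos ⟨rfl, rfl⟩, mul_one]
        · intro z hz hzx
          rcases eq_or_lt_of_le (Finset.mem_Icc.1 hz).2 with rfl | hzy
          · rw [(hassoc f).2 z, hval, if_neg (by rintro ⟨rfl, -⟩; exact hzx rfl), mul_zero]
          · rw [(hassoc f).1 z y hzy, hval, if_neg (by rintro ⟨rfl, -⟩; exact hzx rfl),
              mul_zero, mul_zero]
      have hR : ∑ z ∈ Finset.Icc x y, f x z * (↑u : IncidenceAlgebra R X) z y = a y := by
        rw [Finset.sum_eq_single_of_mem y (Finset.right_mem_Icc.2 hxy.le)]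
        · rw [hval, if_pos ⟨rfl, rfl⟩, one_mul]
        · intro z hz hzy
          rw [hval, if_neg (by rintro ⟨-, rfl⟩; exact hzy rfl), zero_mul]
      rw [hL, hR] at h2
      exact h2
    have hedge : ∀ s t : X, (compGraph X).Adj s t →
        (if s < t then c s t else Ring.inverse (c t s)) = Ring.inverse (a s) * a t := by
      intro s t hst
      rcases hst with h | h
      · rw [if_pos h, ← key s t h, Ring.inverse_mul_cancel_left _ _ (haU s)]
      · rw [if_neg (asymm h)]
        have hcen := Semigroup.mem_center_iff.1 (hc t s h).1
        have hcu := (hc t s h).2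
        have hX : c t s * (Ring.inverse (a s) * a t) = 1 := by
          calc c t s * (Ring.inverse (a s) * a t)
              = Ring.inverse (a s) * a t * c t s := (hcen _).symm
            _ = Ring.inverse (a s) * (a t * c t s) := mul_assoc _ _ _
            _ = Ring.inverse (a s) * a s := by rw [key t s h]
            _ = 1 := Ring.inverse_mul_cancel _ (haU s)
        calc Ring.inverse (c t s)
            = Ring.inverse (c t s) * (c t s * (Ring.inverse (a s) * a t)) := by
              rw [hX, mul_one]
          _ = Ring.inverse (a s) * a t := Ring.inverse_mul_cancel_left _ _ hcu
    rw [walkWeight_telescope c a haU hedge p, walkWeight_telescope c a haU hedge q]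
  · intro hW
    obtain ⟨x₀⟩ := hG.nonempty
    have reach : ∀ x : X, (compGraph X).Reachable x₀ x := fun x => hG.preconnected x₀ x
    set σ : X → R := fun x => walkWeight c (reach x).some with hσ
    have hWcu : ∀ {x y : X} (p : (compGraph X).Walk x y),
        walkWeight c p ∈ Set.center R ∧ IsUnit (walkWeight c p) := by
      intro x y p
      induction p with
      | nil =>
        rw [walkWeight_nil]
        exact ⟨Set.one_mem_center, isUnit_one⟩
      | @cons x w y h p ih =>
        rw [walkWeight_cons]
        rcases h with h | h
        · rw [if_pos h]
          exact ⟨Set.mul_mem_center (hc _ _ h).1 ih.1, ((hc _ _ h).2).mul ih.2⟩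
        · rw [if_neg (asymm h)]
          exact ⟨Set.mul_mem_center
              (center_ring_inverse_mem (hc _ _ h).1 (hc _ _ h).2) ih.1,
            (isUnit_ringInverse.2 (hc _ _ h).2).mul ih.2⟩
    have hσc : ∀ x, σ x ∈ Set.center R := fun x => (hWcu _).1
    have hσu : ∀ x, IsUnit (σ x) := fun x => (hWcu _).2
    have hstep : ∀ x y : X, x < y → σ x * c x y = σ y := by
      intro x y hxy
      have hadj : (compGraph X).Adj x y := Or.inl hxy
      have h := hW x₀ y
        (((reach x).some).append (SimpleGraph.Walk.cons hadj SimpleGraph.Walk.nil))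
        (reach y).some
      rw [walkWeight_append, walkWeight_cons, walkWeight_nil, if_pos hxy, mul_one] at h
      exact h
    let U : IncidenceAlgebra R X :=
      ⟨fun s t => if s = t then σ s else 0, by
        intro s t h; rw [if_neg]; rintro rfl; exact h le_rfl⟩
    let V : IncidenceAlgebra R X :=
      ⟨fun s t => if s = t then Ring.inverse (σ s) else 0, by
        intro s t h; rw [if_neg]; rintro rfl; exact h le_rfl⟩
    have hUapp : ∀ p q : X, U p q = if p = q then σ p else 0 := fun _ _ => rfl
    have hVapp : ∀ p q : X, V p q = if p = q then Ring.inverse (σ p) else 0 := fun _ _ => rfl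
    have hUV : U * V = 1 := by
      ext s t hst
      rw [IncidenceAlgebra.mul_apply, IncidenceAlgebra.one_apply]
      rcases eq_or_lt_of_le hst with rfl | h
      · rw [Finset.Icc_self, Finset.sum_singleton, if_pos rfl, hUapp, hVapp,
          if_pos rfl, if_pos rfl, Ring.mul_inverse_cancel _ (hσu s)]
      · rw [if_neg h.ne, Finset.sum_eq_zero]
        intro z hz
        rw [hUapp, hVapp]
        by_cases h1 : s = z
        · rw [if_neg (fun ht => h.ne (h1.trans ht)), mul_zero]
        · rw [if_neg h1, zero_mul]
    have hVU : V * U = 1 := by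
      ext s t hst
      rw [IncidenceAlgebra.mul_apply, IncidenceAlgebra.one_apply]
      rcases eq_or_lt_of_le hst with rfl | h
      · rw [Finset.Icc_self, Finset.sum_singleton, if_pos rfl, hUapp, hVapp,
          if_pos rfl, if_pos rfl, Ring.inverse_mul_cancel _ (hσu s)]
      · rw [if_neg h.ne, Finset.sum_eq_zero]
        intro z hz
        rw [hUapp, hVapp]
        by_cases h1 : s = z
        · rw [if_neg (fun ht => h.ne (h1.trans ht)), mul_zero]
        · rw [if_neg h1, zero_mul]
    refine ⟨⟨U, V, hUV, hVU⟩, fun f => ?_⟩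
    have hinv : (↑(⟨U, V, hUV, hVU⟩ : (IncidenceAlgebra R X)ˣ)⁻¹ : IncidenceAlgebra R X)
        = V := rfl
    rw [hinv]
    show φ f = V * f * U
    ext s t hst
    have hRHS : (V * f * U) s t = Ring.inverse (σ s) * f s t * σ t := by
      rw [IncidenceAlgebra.mul_apply,
        Finset.sum_eq_single_of_mem t (Finset.right_mem_Icc.2 hst)]
      · rw [hUapp, if_pos rfl, IncidenceAlgebra.mul_apply,
          Finset.sum_eq_single_of_mem s (Finset.left_mem_Icc.2 hst)]
        · rw [hVapp, if_pos rfl]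
        · intro z hz hzs
          rw [hVapp, if_neg (fun h => hzs h.symm), zero_mul]
      · intro z hz hzt
        rw [hUapp, if_neg hzt, mul_zero]
    rw [hRHS]
    rcases eq_or_lt_of_le hst with rfl | h
    · rw [(hassoc f).2 s, mul_assoc, Semigroup.mem_center_iff.1 (hσc s) (f s s),
        Ring.inverse_mul_cancel_left _ _ (hσu s)]
    · have hcst : c s t = Ring.inverse (σ s) * σ t := by
        rw [← hstep s t h, Ring.inverse_mul_cancel_left _ _ (hσu s)]
      rw [(hassoc f).1 s t h, hcst, mul_assoc,
        ← Semigroup.mem_center_iff.1 (hσc t) (f s t), ← mul_assoc]
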